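/- With values taken in the extended reals, sup_{x ∈ F_κ} inf_{φ ∈ Ψ} L(φ, x) = inf_{φ ∈ Ψ} sup_{x ∈ F_κ} L(φ, x); that is, the value of the Sion program sup_{x ∈ F_κ} S(x) equals the value of the dual program inf_{φ ∈ Ψ} D(φ). Moreover the supremum on the left-hand side is attained at some x ∈ F_κ. -/

import Mathlib

open Matrix ComplexOrder

namespace SionAux

section
variable {n : ℕ} {J : Type} [Fintype J]




lemma real_smul_vec (r : ℝ) (x : Fin n → ℂ) : r • x = (r:ℂ) • x := by
  funext i; simp [Complex.real_smul]

lemma quad_expand (M : Matrix (Fin n) (Fin n) ℂ) (x y : Fin n → ℂ) (a b : ℂ) :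
    star (a • x + b • y) ⬝ᵥ M *ᵥ (a • x + b • y)
      = star a * a * (star x ⬝ᵥ M *ᵥ x) + star a * b * (star x ⬝ᵥ M *ᵥ y)
        + star b * a * (star y ⬝ᵥ M *ᵥ x) + star b * b * (star y ⬝ᵥ M *ᵥ y) := by
  simp only [star_add, star_smul, Matrix.mulVec_add, Matrix.mulVec_smul, add_dotProduct,
    dotProduct_add, smul_dotProduct, dotProduct_smul, smul_eq_mul]
  ring

lemma quad_expand_re (M : Matrix (Fin n) (Fin n) ℂ) (x y : Fin n → ℂ) (a b : ℝ) :
    (star (a • x + b • y) ⬝ᵥ M *ᵥ (a • x + b • y)).re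
      = a * a * (star x ⬝ᵥ M *ᵥ x).re + a * b * ((star x ⬝ᵥ M *ᵥ y).re + (star y ⬝ᵥ M *ᵥ x).re)
        + b * b * (star y ⬝ᵥ M *ᵥ y).re := by
  rw [real_smul_vec, real_smul_vec, quad_expand]
  simp only [Complex.star_def, Complex.conj_ofReal, Complex.add_re, Complex.mul_re,
    Complex.ofReal_re, Complex.ofReal_im, Complex.mul_im]
  ring

lemma lin_expand_re (t : Fin n → ℂ) (x y : Fin n → ℂ) (a b : ℝ) :
    (star t ⬝ᵥ (a • x + b • y)).re = a * (star t ⬝ᵥ x).re + b * (star t ⬝ᵥ y).re := by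
  rw [real_smul_vec, real_smul_vec]
  simp only [dotProduct_add, dotProduct_smul, smul_eq_mul, Complex.add_re, Complex.mul_re,
    Complex.ofReal_re, Complex.ofReal_im]
  ring

/-- convexity core inequality -/
lemma quad_concaveOn (M : Matrix (Fin n) (Fin n) ℂ)
    (hM : ∀ v, 0 ≤ (star v ⬝ᵥ M *ᵥ v).re) (t : Fin n → ℂ) (cst : ℝ) :
    ConcaveOn ℝ Set.univ
      (fun x : Fin n → ℂ => 2 * (star t ⬝ᵥ x).re - (star x ⬝ᵥ M *ᵥ x).re + cst) := by
  refine ⟨convex_univ, fun x _ y _ a b ha hb hab => ?_⟩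
  simp only [smul_eq_mul]
  rw [quad_expand_re, lin_expand_re]
  have h1 : 0 ≤ (star (x - y) ⬝ᵥ M *ᵥ (x - y)).re := hM _
  have h2 : (star (x - y) ⬝ᵥ M *ᵥ (x - y)).re
      = (star x ⬝ᵥ M *ᵥ x).re - ((star x ⬝ᵥ M *ᵥ y).re + (star y ⬝ᵥ M *ᵥ x).re)
        + (star y ⬝ᵥ M *ᵥ y).re := by
    have := quad_expand_re M x y 1 (-1)
    simpa [sub_eq_add_neg] using this
  have hb' : b = 1 - a := by linarith
  subst hb'
  nlinarith [mul_nonneg (mul_nonneg ha hb) (h2 ▸ h1)]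

lemma cont_quad (M : Matrix (Fin n) (Fin n) ℂ) :
    Continuous fun x : Fin n → ℂ => star x ⬝ᵥ M *ᵥ x := by
  simp only [dotProduct, Matrix.mulVec, Pi.star_apply]
  exact continuous_finset_sum _ fun i _ =>
    ((continuous_star.comp (continuous_apply i)).mul
      (continuous_finset_sum _ fun j _ => continuous_const.mul (continuous_apply j)))

lemma cont_lin (t : Fin n → ℂ) : Continuous fun x : Fin n → ℂ => star t ⬝ᵥ x := by
  simp only [dotProduct]
  exact continuous_finset_sum _ fun i _ => continuous_const.mul (continuous_apply i)

lemma cont_form (M : Matrix (Fin n) (Fin n) ℂ) (t : Fin n → ℂ) (cst : ℝ) :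
    Continuous fun x : Fin n → ℂ =>
      2 * (star t ⬝ᵥ x).re - (star x ⬝ᵥ M *ᵥ x).re + cst := by
  have h1 := (Complex.continuous_re.comp (cont_lin (n := n) t))
  have h2 := (Complex.continuous_re.comp (cont_quad M))
  continuity



lemma sum_mulVec' (N : J → Matrix (Fin n) (Fin n) ℂ) (x : Fin n → ℂ) :
    (∑ j, N j) *ᵥ x = ∑ j, N j *ᵥ x := by
  funext i
  simp [Matrix.mulVec, dotProduct, Matrix.sum_apply, Finset.sum_mul, Finset.sum_apply]
  exact Finset.sum_comm

lemma dotProduct_sum' (v : Fin n → ℂ) (w : J → Fin n → ℂ) :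
    v ⬝ᵥ (∑ j, w j) = ∑ j, v ⬝ᵥ w j := by
  simp [dotProduct, Finset.mul_sum, Finset.sum_apply]
  exact Finset.sum_comm

lemma sum_dotProduct' (w : J → Fin n → ℂ) (v : Fin n → ℂ) :
    (∑ j, w j) ⬝ᵥ v = ∑ j, w j ⬝ᵥ v := by
  simp [dotProduct, Finset.sum_mul, Finset.sum_apply]
  exact Finset.sum_comm

lemma quad_sum_re (A : J → Matrix (Fin n) (Fin n) ℂ) (r : J → ℝ) (x : Fin n → ℂ) :
    (star x ⬝ᵥ (∑ j, r j • A j) *ᵥ x).re = ∑ j, r j * (star x ⬝ᵥ A j *ᵥ x).re := by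
  rw [sum_mulVec']
  simp only [Matrix.smul_mulVec]
  rw [dotProduct_sum']
  simp only [dotProduct_smul]
  rw [Complex.re_sum]
  simp [Complex.smul_re]

lemma lin_sum_re (s : J → Fin n → ℂ) (r : J → ℝ) (x : Fin n → ℂ) :
    (star (∑ j, (r j : ℂ) • s j) ⬝ᵥ x).re = ∑ j, r j * (star (s j) ⬝ᵥ x).re := by
  rw [star_sum]
  simp only [star_smul, Complex.star_def, Complex.conj_ofReal]
  rw [sum_dotProduct']
  simp only [smul_dotProduct]
  rw [Complex.re_sum]
  simp [smul_eq_mul, Complex.mul_re]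

lemma combo_form (A : J → Matrix (Fin n) (Fin n) ℂ) (s : J → Fin n → ℂ) (c : J → ℝ)
    (f : J → (Fin n → ℂ) → ℝ)
    (hf : ∀ j x, f j x = 2 * (star (s j) ⬝ᵥ x).re - (star x ⬝ᵥ (A j) *ᵥ x).re + c j)
    (r : J → ℝ) (x : Fin n → ℂ) :
    ∑ j, r j * f j x
      = 2 * (star (∑ j, (r j : ℂ) • s j) ⬝ᵥ x).re
        - (star x ⬝ᵥ (∑ j, r j • A j) *ᵥ x).re + ∑ j, r j * c j := by
  rw [quad_sum_re, lin_sum_re, Finset.mul_sum, ← Finset.sum_sub_distrib, ← Finset.sum_add_distrib]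
  refine Finset.sum_congr rfl fun j _ => ?_
  rw [hf]; ring


lemma nonneg_quad_of_compact (M : Matrix (Fin n) (Fin n) ℂ) (t : Fin n → ℂ) (cst : ℝ)
    (hcpt : IsCompact {x : Fin n → ℂ | 0 ≤ 2 * (star t ⬝ᵥ x).re - (star x ⬝ᵥ M *ᵥ x).re + cst})
    (hne : {x : Fin n → ℂ | 0 ≤ 2 * (star t ⬝ᵥ x).re - (star x ⬝ᵥ M *ᵥ x).re + cst}.Nonempty) :
    ∀ v, 0 ≤ (star v ⬝ᵥ M *ᵥ v).re := by
  set S := {x : Fin n → ℂ | 0 ≤ 2 * (star t ⬝ᵥ x).re - (star x ⬝ᵥ M *ᵥ x).re + cst} with hS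
  by_contra hcon
  push_neg at hcon
  obtain ⟨v, hv⟩ := hcon
  obtain ⟨x0, hx0⟩ := hne
  obtain ⟨R, hR⟩ := hcpt.isBounded.exists_norm_le
  set α : ℝ := -(star v ⬝ᵥ M *ᵥ v).re with hα
  have hα0 : 0 < α := by simp [hα]; linarith
  have hvne : v ≠ 0 := by
    intro h
    rw [h] at hv
    simp at hv
  have hvnorm : 0 < ‖v‖ := norm_pos_iff.mpr hvne
  set β : ℝ := 2 * (star t ⬝ᵥ v).re - ((star x0 ⬝ᵥ M *ᵥ v).re + (star v ⬝ᵥ M *ᵥ x0).re) with hβ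
  set γ : ℝ := 2 * (star t ⬝ᵥ x0).re - (star x0 ⬝ᵥ M *ᵥ x0).re + cst with hγ
  have hγ0 : 0 ≤ γ := hx0
  have key : ∀ τ : ℝ, 2 * (star t ⬝ᵥ (x0 + τ • v)).re
      - (star (x0 + τ • v) ⬝ᵥ M *ᵥ (x0 + τ • v)).re + cst = γ + β * τ + α * (τ * τ) := by
    intro τ
    have e1 : x0 + τ • v = (1:ℝ) • x0 + τ • v := by rw [one_smul]
    rw [e1, quad_expand_re, lin_expand_re]
    simp only [hβ, hγ, hα]
    ring
  set τ := max ((|β| + |γ|) / α + 1) ((R + ‖x0‖ + 1) / ‖v‖) with hτ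
  have hτ1 : (|β| + |γ|) / α + 1 ≤ τ := le_max_left _ _
  have hτ2 : (R + ‖x0‖ + 1) / ‖v‖ ≤ τ := le_max_right _ _
  have hτpos : 1 ≤ τ := by
    have : 0 ≤ (|β| + |γ|) / α := div_nonneg (by positivity) hα0.le
    linarith
  have hdiv : |β| + |γ| ≤ α * (τ - 1) := by
    rw [← div_le_iff₀' hα0]
    linarith
  have hmem : x0 + τ • v ∈ S := by
    simp only [hS, Set.mem_setOf_eq]
    rw [key τ]
    have h1 : -|β| * τ ≤ β * τ := by
      have := neg_abs_le β
      nlinarith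
    have h5 : |β| ≤ α * (τ - 1) := le_trans (le_add_of_nonneg_right (abs_nonneg γ)) hdiv
    have h6 : 0 ≤ (α * (τ - 1) - |β|) * τ := mul_nonneg (by linarith) (by linarith)
    have h7 : 0 ≤ α * (τ - 1) := mul_nonneg hα0.le (by linarith)
    nlinarith
  have hnorm : ‖x0 + τ • v‖ ≤ R := hR _ hmem
  have h3 : τ * ‖v‖ ≤ ‖x0 + τ • v‖ + ‖x0‖ := by
    have := norm_add_le (x0 + τ • v) (-x0)
    have e : x0 + τ • v + -x0 = τ • v := by abel
    rw [e, norm_neg] at this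
    calc τ * ‖v‖ = ‖τ • v‖ := by rw [norm_smul]; simp [abs_of_pos (by linarith : (0:ℝ) < τ)]
    _ ≤ _ := this
  have h4 : R + ‖x0‖ + 1 ≤ τ * ‖v‖ := by
    rw [← div_le_iff₀ hvnorm] at *
    linarith
  linarith



lemma posSemidef_real_smul {P : Matrix (Fin n) (Fin n) ℂ} (hP : P.PosSemidef) {a : ℝ}
    (ha : 0 ≤ a) : (a • P).PosSemidef := by
  refine Matrix.PosSemidef.of_dotProduct_mulVec_nonneg ?_ ?_
  · show (a • P)ᴴ = a • P
    rw [Matrix.conjTranspose_smul, star_trivial, hP.1]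
  · intro x
    rw [Matrix.smul_mulVec, dotProduct_smul]
    have h := hP.dotProduct_mulVec_nonneg x
    rw [show (a • (star x ⬝ᵥ P *ᵥ x)) = ((a:ℂ) * (star x ⬝ᵥ P *ᵥ x)) from Complex.real_smul]
    have ha' : (0:ℂ) ≤ (a:ℂ) := by
      rw [Complex.zero_le_real]
      exact ha
    exact mul_nonneg ha' h

end

lemma exists_combo {ι : Type} [Fintype ι] [Nonempty ι]
    {E : Type} [AddCommGroup E] [Module ℝ E]
    (K : Set E) (hK : Convex ℝ K) (hKne : K.Nonempty)
    (g : ι → E → ℝ)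
    (hconc : ∀ i, ConcaveOn ℝ K (g i))
    (r : ℝ)
    (hlt : ∀ x ∈ K, ∃ i, g i x < r) :
    ∃ μ : ι → ℝ, (∀ i, 0 ≤ μ i) ∧ (∑ i, μ i = 1) ∧ ∀ x ∈ K, ∑ i, μ i * g i x ≤ r := by
  classical
  set C : Set (ι → ℝ) := {z | ∃ x ∈ K, ∀ i, z i ≤ g i x} with hC
  set Q : Set (ι → ℝ) := {z | ∀ i, r < z i} with hQ
  have hQopen : IsOpen Q := by
    have : Q = ⋂ i, (fun z : ι → ℝ => z i) ⁻¹' Set.Ioi r := by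
      ext z; simp [hQ, Set.mem_iInter]
    rw [this]
    exact isOpen_iInter_of_finite fun i => isOpen_Ioi.preimage (continuous_apply i)
  have hQconv : Convex ℝ Q := by
    intro z hz w hw a b ha hb hab
    intro i
    have := (convex_Ioi r) (hz i) (hw i) ha hb hab
    simpa using this
  have hCconv : Convex ℝ C := by
    rintro z ⟨x, hxK, hzx⟩ w ⟨y, hyK, hwy⟩ a b ha hb hab
    refine ⟨a • x + b • y, hK hxK hyK ha hb hab, fun i => ?_⟩
    have h1 : a * z i + b * w i ≤ a * g i x + b * g i y :=
      add_le_add (mul_le_mul_of_nonneg_left (hzx i) ha)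
        (mul_le_mul_of_nonneg_left (hwy i) hb)
    have h2 := (hconc i).2 hxK hyK ha hb hab
    simp only [smul_eq_mul] at h2 ⊢
    exact le_trans h1 h2
  have hdisj : Disjoint Q C := by
    rw [Set.disjoint_left]
    rintro z hzQ ⟨x, hxK, hzx⟩
    obtain ⟨i, hi⟩ := hlt x hxK
    exact absurd (lt_of_lt_of_le (hzQ i) (hzx i)) (not_lt.mpr hi.le)
  obtain ⟨F, u, hFQ, hFC⟩ := geometric_hahn_banach_open hQconv hQopen hCconv hdisj
  set lam : ι → ℝ := fun i => F (Pi.single i 1) with hlam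
  have hrepr : ∀ z : ι → ℝ, F z = ∑ i, z i * lam i := by
    intro z
    have hz : z = ∑ i, z i • (Pi.single i 1 : ι → ℝ) := by
      funext j
      simp [Finset.sum_apply, Pi.single_apply]
    conv_lhs => rw [hz]
    rw [map_sum]
    simp [hlam, smul_eq_mul]
  have hbase : ∀ ε : ℝ, 0 < ε → ((fun _ => r + ε) : ι → ℝ) ∈ Q := fun ε hε i => by
    show r < r + ε
    linarith
  have hlam_nonpos : ∀ i, lam i ≤ 0 := by
    intro i
    by_contra hpos
    push_neg at hpos
    set τ : ℝ := max 0 ((u - F (fun _ => r + 1)) / lam i + 1) with hτ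
    have hτ0 : 0 ≤ τ := le_max_left _ _
    have hmem : ((fun _ => r + 1) + τ • (Pi.single i 1 : ι → ℝ) : ι → ℝ) ∈ Q := by
      intro j
      simp only [Pi.add_apply, Pi.smul_apply, smul_eq_mul]
      rcases eq_or_ne j i with rfl | hne
      · simp only [Pi.single_eq_same]
        nlinarith
      · simp [Pi.single_eq_of_ne hne]
    have := hFQ _ hmem
    rw [map_add, _root_.map_smul] at this
    have hτ1 : (u - F (fun _ => r + 1)) / lam i + 1 ≤ τ := le_max_right _ _
    have : (u - F (fun _ => r + 1)) / lam i * lam i < u - F (fun _ => r + 1) := by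
      have hlt : τ * lam i < u - F (fun _ => r + 1) := by
        simp only [smul_eq_mul] at this
        linarith
      calc (u - F (fun _ => r + 1)) / lam i * lam i ≤ (τ - 1) * lam i := by
            apply mul_le_mul_of_nonneg_right _ hpos.le
            linarith
        _ < τ * lam i := by nlinarith
        _ < _ := hlt
    rw [div_mul_cancel₀ _ (ne_of_gt hpos)] at this
    exact lt_irrefl _ this
  have hlam_ne : ∃ i, lam i < 0 := by
    by_contra hno
    push_neg at hno
    have hz : ∀ i, lam i = 0 := fun i => le_antisymm (hlam_nonpos i) (hno i)
    have hF0 : ∀ z, F z = 0 := by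
      intro z; rw [hrepr]; simp [hz]
    obtain ⟨x0, hx0⟩ := hKne
    have h1 : u ≤ 0 := by
      have := hFC (fun i => g i x0) ⟨x0, hx0, fun i => le_rfl⟩
      rwa [hF0] at this
    have h2 : 0 < u := by
      have := hFQ _ (hbase 1 one_pos)
      rwa [hF0] at this
    linarith
  set T : ℝ := -∑ i, lam i with hT
  have hTpos : 0 < T := by
    obtain ⟨i0, hi0⟩ := hlam_ne
    have hsum : ∑ i, lam i < ∑ i : ι, (0:ℝ) :=
      Finset.sum_lt_sum (fun i _ => hlam_nonpos i) ⟨i0, Finset.mem_univ _, hi0⟩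
    rw [Finset.sum_const_zero] at hsum
    rw [hT]; linarith
  clear_value T
  have hT0 : T ≠ 0 := ne_of_gt hTpos
  have hu_ge : -(r * T) ≤ u := by
    by_contra hlt'
    push_neg at hlt'
    obtain ⟨ε, hεpos, hεT⟩ : ∃ ε : ℝ, 0 < ε ∧ ε * T = (-(r * T) - u) / 2 := by
      refine ⟨(-(r * T) - u) / (2 * T), div_pos (by linarith) (by linarith), ?_⟩
      field_simp
    have hQlt := hFQ _ (hbase ε hεpos)
    rw [hrepr] at hQlt
    have hcalc : ∑ i, (r + ε) * lam i = -((r + ε) * T) := by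
      rw [← Finset.mul_sum]; rw [hT]; ring
    rw [hcalc] at hQlt
    have expand : -((r + ε) * T) = -(r * T) - ε * T := by ring
    rw [expand] at hQlt
    linarith
  refine ⟨fun i => -lam i / T, fun i => div_nonneg (by linarith [hlam_nonpos i]) hTpos.le, ?_, ?_⟩
  · rw [← Finset.sum_div]
    rw [div_eq_one_iff_eq hTpos.ne']
    simp [hT]
  · intro x hx
    have hmemC : (fun i => g i x) ∈ C := ⟨x, hx, fun i => le_rfl⟩
    have h1 : u ≤ ∑ i, g i x * lam i := by
      have := hFC _ hmemC
      rwa [hrepr] at this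
    have h2 : ∑ i, -lam i / T * g i x = -(1/T) * ∑ i, g i x * lam i := by
      rw [Finset.mul_sum]
      refine Finset.sum_congr rfl fun i _ => by ring
    rw [h2]
    have hG : -(r * T) ≤ ∑ i, g i x * lam i := le_trans hu_ge h1
    have h4 : (-(r * T)) * (1/T) ≤ (∑ i, g i x * lam i) * (1/T) :=
      mul_le_mul_of_nonneg_right hG (by positivity)
    have h5 : (-(r * T)) * (1/T) = -r := by field_simp
    nlinarith [h4, h5]


end SionAux

open Matrix ComplexOrder

/-- Lemma 0, Sion minimax for SCQPs.
With values in the extended reals,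
`sup_{x ∈ Fκ} inf_{φ ∈ Ψ} L(φ,x) = inf_{φ ∈ Ψ} sup_{x ∈ Fκ} L(φ,x)`,
and the supremum on the left is attained at some `x ∈ Fκ`. -/
theorem sion_duality_for_SCQP
    (n : ℕ) (hn : 1 ≤ n) (J : Type) [Fintype J]
    (Ao : Matrix (Fin n) (Fin n) ℂ) (A : J → Matrix (Fin n) (Fin n) ℂ)
    (so : Fin n → ℂ) (s : J → Fin n → ℂ) (co : ℝ) (c : J → ℝ)
    (hAo : Ao.IsHermitian) (hA : ∀ j, (A j).IsHermitian)
    (fo : (Fin n → ℂ) → ℝ)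
    (hfo : ∀ x, fo x = 2 * (star so ⬝ᵥ x).re - (star x ⬝ᵥ Ao.mulVec x).re + co)
    (f : J → (Fin n → ℂ) → ℝ)
    (hf : ∀ j x, f j x = 2 * (star (s j) ⬝ᵥ x).re - (star x ⬝ᵥ (A j).mulVec x).re + c j)
    (L : (J → ℝ) → (Fin n → ℂ) → ℝ)
    (hL : ∀ φ x, L φ x = fo x + ∑ j, φ j * f j x)
    (Ψ : Set (J → ℝ))
    (hΨ : Ψ = {φ | (∀ j, 0 ≤ φ j) ∧ (Ao + ∑ j, φ j • A j).PosSemidef})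
    (hΨne : Ψ.Nonempty)
    (κ : J → ℝ) (hκ : ∀ j, 0 ≤ κ j)
    (Fκ : Set (Fin n → ℂ))
    (hFκ : Fκ = {x | 0 ≤ ∑ j, κ j * f j x})
    (hFκne : Fκ.Nonempty) (hFκcpt : IsCompact Fκ) :
    (⨆ x ∈ Fκ, ⨅ φ ∈ Ψ, (L φ x : EReal)) = (⨅ φ ∈ Ψ, ⨆ x ∈ Fκ, (L φ x : EReal)) ∧
    ∃ x ∈ Fκ, (⨅ φ ∈ Ψ, (L φ x : EReal)) = ⨆ y ∈ Fκ, ⨅ φ ∈ Ψ, (L φ y : EReal) := by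
  classical
  -- canonical quadratic form of L φ
  have L_form : ∀ (φ : J → ℝ) (x), L φ x =
      2 * (star (so + ∑ j, (φ j : ℂ) • s j) ⬝ᵥ x).re
        - (star x ⬝ᵥ (Ao + ∑ j, φ j • A j) *ᵥ x).re + (co + ∑ j, φ j * c j) := by
    intro φ x
    rw [hL φ x, hfo x, SionAux.combo_form A s c f hf φ x]
    rw [star_add, add_dotProduct, Matrix.add_mulVec, dotProduct_add, Complex.add_re,
      Complex.add_re]
    ring
  have contL : ∀ φ : J → ℝ, Continuous (L φ) := by
    intro φ
    have he : L φ = fun x =>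
        2 * (star (so + ∑ j, (φ j : ℂ) • s j) ⬝ᵥ x).re
          - (star x ⬝ᵥ (Ao + ∑ j, φ j • A j) *ᵥ x).re + (co + ∑ j, φ j * c j) :=
      funext (L_form φ)
    rw [he]
    exact SionAux.cont_form _ _ _
  have concL : ∀ φ ∈ Ψ, ConcaveOn ℝ Set.univ (L φ) := by
    intro φ hφ
    rw [hΨ] at hφ
    have hnn : ∀ v, 0 ≤ (star v ⬝ᵥ (Ao + ∑ j, φ j • A j) *ᵥ v).re := by
      intro v
      have h := hφ.2.dotProduct_mulVec_nonneg v
      rw [Complex.le_def] at h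
      simpa using h.1
    have he : L φ = fun x =>
        2 * (star (so + ∑ j, (φ j : ℂ) • s j) ⬝ᵥ x).re
          - (star x ⬝ᵥ (Ao + ∑ j, φ j • A j) *ᵥ x).re + (co + ∑ j, φ j * c j) :=
      funext (L_form φ)
    rw [he]
    exact SionAux.quad_concaveOn _ hnn _ _
  -- Fκ : convexity
  have hFκ_form : Fκ = {x | 0 ≤ 2 * (star (∑ j, (κ j : ℂ) • s j) ⬝ᵥ x).re
      - (star x ⬝ᵥ (∑ j, κ j • A j) *ᵥ x).re + ∑ j, κ j * c j} := by
    rw [hFκ]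
    ext x
    simp only [Set.mem_setOf_eq]
    rw [SionAux.combo_form A s c f hf κ x]
  have hMκ : ∀ v, 0 ≤ (star v ⬝ᵥ (∑ j, κ j • A j) *ᵥ v).re :=
    SionAux.nonneg_quad_of_compact _ _ _ (hFκ_form ▸ hFκcpt) (hFκ_form ▸ hFκne)
  have hFκconc := SionAux.quad_concaveOn _ hMκ (∑ j, (κ j : ℂ) • s j) (∑ j, κ j * c j)
  have hFκconv : Convex ℝ Fκ := by
    rw [hFκ_form]
    intro x hx y hy a b ha hb hab
    simp only [Set.mem_setOf_eq] at hx hy ⊢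
    have h := hFκconc.2 (Set.mem_univ x) (Set.mem_univ y) ha hb hab
    simp only [smul_eq_mul] at h
    nlinarith [mul_nonneg ha hx, mul_nonneg hb hy]
  -- Ψ : convexity
  have hΨconv : Convex ℝ Ψ := by
    rw [hΨ]
    rintro φ₁ ⟨h1n, h1p⟩ φ₂ ⟨h2n, h2p⟩ a b ha hb hab
    constructor
    · intro j
      have := mul_nonneg ha (h1n j)
      have := mul_nonneg hb (h2n j)
      simp only [Pi.add_apply, Pi.smul_apply, smul_eq_mul]
      linarith
    · have e1 : ∀ j : J, (a • φ₁ + b • φ₂) j • A j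
          = (a * φ₁ j) • A j + (b * φ₂ j) • A j := by
        intro j
        simp only [Pi.add_apply, Pi.smul_apply, smul_eq_mul]
        rw [add_smul]
      have key : Ao + ∑ j, (a • φ₁ + b • φ₂) j • A j
          = a • (Ao + ∑ j, φ₁ j • A j) + b • (Ao + ∑ j, φ₂ j • A j) := by
        rw [Finset.sum_congr rfl (fun j _ => e1 j), Finset.sum_add_distrib]
        rw [smul_add, smul_add, Finset.smul_sum, Finset.smul_sum]
        simp only [smul_smul]
        have : Ao = (a + b) • Ao := by rw [hab, one_smul]
        conv_lhs => rw [this]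
        rw [add_smul]
        abel
      rw [key]
      exact (SionAux.posSemidef_real_smul h1p ha).add (SionAux.posSemidef_real_smul h2p hb)
  -- affinity of L in φ
  have L_affine : ∀ {ι : Type} [Fintype ι] (μ : ι → ℝ), (∑ i, μ i = 1) →
      ∀ (φs : ι → J → ℝ) (x), L (∑ i, μ i • φs i) x = ∑ i, μ i * L (φs i) x := by
    intro ι _ μ hμ φs x
    simp only [hL]
    have e1 : ∀ j, (∑ i, μ i • φs i) j * f j x = ∑ i, μ i * (φs i j * f j x) := by
      intro j
      rw [Finset.sum_apply, Finset.sum_mul]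
      exact Finset.sum_congr rfl fun i _ => by simp [mul_assoc]
    rw [Finset.sum_congr rfl fun j _ => e1 j, Finset.sum_comm]
    simp only [mul_add]
    rw [Finset.sum_add_distrib, ← Finset.sum_mul, hμ, one_mul]
    congr 1
    exact Finset.sum_congr rfl fun i _ => (Finset.mul_sum _ _ _).symm
  -- the key finite-intersection statement
  have main : ∀ r : ℝ, (r : EReal) < (⨅ φ ∈ Ψ, ⨆ x ∈ Fκ, (L φ x : EReal)) →
      ∃ x ∈ Fκ, ∀ φ ∈ Ψ, r ≤ L φ x := by
    intro r hr
    have hclosed : ∀ φ : ↥Ψ, IsClosed {x : Fin n → ℂ | r ≤ L ↑φ x} := fun φ =>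
      isClosed_le continuous_const (contL ↑φ)
    have hfin : ∀ u : Finset ↥Ψ, (Fκ ∩ ⋂ φ ∈ u, {x | r ≤ L ↑φ x}).Nonempty := by
      intro u
      by_contra hemp
      rw [Set.not_nonempty_iff_eq_empty] at hemp
      have hlt : ∀ x ∈ Fκ, ∃ i : ↥Ψ, i ∈ u ∧ L ↑i x < r := by
        intro x hx
        by_contra hno
        push_neg at hno
        have hmem : x ∈ Fκ ∩ ⋂ φ ∈ u, {x | r ≤ L ↑φ x} :=
          ⟨hx, Set.mem_iInter₂.mpr fun i hi => hno i hi⟩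
        rw [hemp] at hmem
        exact hmem
      have hune : u.Nonempty := by
        rcases u.eq_empty_or_nonempty with rfl | h
        · obtain ⟨x, hx⟩ := hFκne
          obtain ⟨i, hi, -⟩ := hlt x hx
          exact absurd hi (by simp)
        · exact h
      haveI : Nonempty {i // i ∈ u} := ⟨⟨hune.choose, hune.choose_spec⟩⟩
      obtain ⟨μ, hμ0, hμ1, hμle⟩ := SionAux.exists_combo (ι := {i // i ∈ u}) Fκ hFκconv hFκne
        (fun i => L ((i : ↥Ψ) : J → ℝ))
        (fun i => ((concL _ (i : ↥Ψ).2).subset (Set.subset_univ _) hFκconv))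
        r
        (fun x hx => by
          obtain ⟨i, hi, hlt'⟩ := hlt x hx
          exact ⟨⟨i, hi⟩, hlt'⟩)
      set φstar : J → ℝ := ∑ i : {i // i ∈ u}, μ i • ((i : ↥Ψ) : J → ℝ) with hφstar
      have hφΨ : φstar ∈ Ψ :=
        hΨconv.sum_mem (fun i _ => hμ0 i) hμ1 (fun i _ => (i : ↥Ψ).2)
      have hub : ∀ x ∈ Fκ, L φstar x ≤ r := by
        intro x hx
        rw [hφstar, L_affine μ hμ1 _ x]
        exact hμle x hx
      have h1 : (r : EReal) < ⨆ x ∈ Fκ, (L φstar x : EReal) :=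
        lt_of_lt_of_le hr (iInf₂_le φstar hφΨ)
      obtain ⟨x, hx1⟩ := lt_iSup_iff.mp h1
      obtain ⟨hxF, hx2⟩ := lt_iSup_iff.mp hx1
      exact absurd (EReal.coe_lt_coe_iff.mp hx2) (not_lt.mpr (hub x hxF))
    obtain ⟨x, hxF, hxI⟩ :=
      hFκcpt.inter_iInter_nonempty (fun φ : ↥Ψ => {x | r ≤ L ↑φ x}) hclosed hfin
    exact ⟨x, hxF, fun φ hφ => Set.mem_iInter.mp hxI ⟨φ, hφ⟩⟩
  -- easy direction
  have easy : (⨆ x ∈ Fκ, ⨅ φ ∈ Ψ, (L φ x : EReal)) ≤ ⨅ φ ∈ Ψ, ⨆ x ∈ Fκ, (L φ x : EReal) := by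
    apply iSup₂_le
    intro x hx
    apply le_iInf₂
    intro φ hφ
    exact le_trans (iInf₂_le φ hφ) (le_iSup₂ (f := fun x (_ : x ∈ Fκ) => (L φ x : EReal)) x hx)
  have hard : (⨅ φ ∈ Ψ, ⨆ x ∈ Fκ, (L φ x : EReal)) ≤ ⨆ x ∈ Fκ, ⨅ φ ∈ Ψ, (L φ x : EReal) := by
    by_contra hcon
    push_neg at hcon
    obtain ⟨r, hr1, hr2⟩ := EReal.exists_between_coe_real hcon
    obtain ⟨x, hxF, hall⟩ := main r hr2
    have h1 : (r : EReal) ≤ ⨅ φ ∈ Ψ, (L φ x : EReal) :=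
      le_iInf₂ fun φ hφ => EReal.coe_le_coe_iff.mpr (hall φ hφ)
    have h2 : (r : EReal) ≤ ⨆ x ∈ Fκ, ⨅ φ ∈ Ψ, (L φ x : EReal) :=
      le_trans h1 (le_iSup₂ (f := fun x (_ : x ∈ Fκ) => ⨅ φ ∈ Ψ, (L φ x : EReal)) x hxF)
    exact absurd (lt_of_le_of_lt h2 hr1) (lt_irrefl _)
  have eq1 : (⨆ x ∈ Fκ, ⨅ φ ∈ Ψ, (L φ x : EReal)) = ⨅ φ ∈ Ψ, ⨆ x ∈ Fκ, (L φ x : EReal) :=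
    le_antisymm easy hard
  refine ⟨eq1, ?_⟩
  by_cases hbot : (⨅ φ ∈ Ψ, ⨆ x ∈ Fκ, (L φ x : EReal)) = ⊥
  · obtain ⟨x0, hx0⟩ := hFκne
    refine ⟨x0, hx0, ?_⟩
    have hsb : (⨆ y ∈ Fκ, ⨅ φ ∈ Ψ, (L φ y : EReal)) = ⊥ := by rw [eq1]; exact hbot
    have h1 : (⨅ φ ∈ Ψ, (L φ x0 : EReal)) ≤ ⊥ := by
      rw [← hsb]
      exact le_iSup₂ (f := fun y (_ : y ∈ Fκ) => ⨅ φ ∈ Ψ, (L φ y : EReal)) x0 hx0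
    rw [hsb]
    exact le_antisymm h1 bot_le
  · obtain ⟨φ0, hφ0⟩ := hΨne
    obtain ⟨B, hB⟩ : ∃ B : ℝ, ∀ x ∈ Fκ, L φ0 x ≤ B := by
      obtain ⟨B, hB⟩ := (hFκcpt.bddAbove_image (contL φ0).continuousOn)
      exact ⟨B, fun x hx => hB (Set.mem_image_of_mem _ hx)⟩
    have htop : (⨅ φ ∈ Ψ, ⨆ x ∈ Fκ, (L φ x : EReal)) ≠ ⊤ := by
      have h2 : (⨅ φ ∈ Ψ, ⨆ x ∈ Fκ, (L φ x : EReal)) ≤ (B : EReal) :=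
        le_trans (iInf₂_le φ0 hφ0)
          (iSup₂_le fun x hx => EReal.coe_le_coe_iff.mpr (hB x hx))
      exact ne_top_of_le_ne_top (EReal.coe_ne_top B) h2
    set d : ℝ := (⨅ φ ∈ Ψ, ⨆ x ∈ Fκ, (L φ x : EReal)).toReal with hddef
    have hd : (d : EReal) = ⨅ φ ∈ Ψ, ⨆ x ∈ Fκ, (L φ x : EReal) := EReal.coe_toReal htop hbot
    set T : ℕ → Set (Fin n → ℂ) := fun k =>
      Fκ ∩ ⋂ φ : ↥Ψ, {x | d - 1 / ((k : ℝ) + 1) ≤ L ↑φ x} with hTdef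
    have hclosed' : ∀ k : ℕ, IsClosed (⋂ φ : ↥Ψ, {x : Fin n → ℂ | d - 1 / ((k : ℝ) + 1) ≤ L ↑φ x}) :=
      fun k => isClosed_iInter fun φ => isClosed_le continuous_const (contL ↑φ)
    have hTcl : ∀ k, IsClosed (T k) := fun k => hFκcpt.isClosed.inter (hclosed' k)
    have hTcpt : ∀ k, IsCompact (T k) := fun k => hFκcpt.inter_right (hclosed' k)
    have hTne : ∀ k, (T k).Nonempty := by
      intro k
      have hpos : (0 : ℝ) < 1 / ((k : ℝ) + 1) := by positivity
      have hrlt : ((d - 1 / ((k : ℝ) + 1) : ℝ) : EReal) < ⨅ φ ∈ Ψ, ⨆ x ∈ Fκ, (L φ x : EReal) := by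
        rw [← hd]
        exact EReal.coe_lt_coe_iff.mpr (by linarith)
      obtain ⟨x, hxF, hall⟩ := main _ hrlt
      exact ⟨x, hxF, Set.mem_iInter.mpr fun φ => hall ↑φ φ.2⟩
    have hTdir : Directed (· ⊇ ·) T := by
      have hmono : ∀ k l : ℕ, k ≤ l → T l ⊆ T k := by
        intro k l hkl x hx
        refine ⟨hx.1, Set.mem_iInter.mpr fun φ => ?_⟩
        have h1 := Set.mem_iInter.mp hx.2 φ
        have h2 : (1 : ℝ) / ((l : ℝ) + 1) ≤ 1 / ((k : ℝ) + 1) := by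
          apply one_div_le_one_div_of_le (by positivity)
          have : (k : ℝ) ≤ (l : ℝ) := by exact_mod_cast hkl
          linarith
        simp only [Set.mem_setOf_eq] at h1 ⊢
        linarith
      intro k l
      exact ⟨max k l, hmono k _ (le_max_left _ _), hmono l _ (le_max_right _ _)⟩
    obtain ⟨x, hx⟩ := IsCompact.nonempty_iInter_of_directed_nonempty_isCompact_isClosed
      T hTdir hTne hTcpt hTcl
    have hxF : x ∈ Fκ := (Set.mem_iInter.mp hx 0).1
    have hlow : ∀ φ ∈ Ψ, d ≤ L φ x := by
      intro φ hφ
      by_contra hno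
      push_neg at hno
      obtain ⟨k, hk⟩ := exists_nat_one_div_lt (by linarith : (0:ℝ) < d - L φ x)
      have h1 := Set.mem_iInter.mp (Set.mem_iInter.mp hx k).2 ⟨φ, hφ⟩
      simp only [Set.mem_setOf_eq] at h1
      linarith
    refine ⟨x, hxF, le_antisymm ?_ ?_⟩
    · exact le_iSup₂ (f := fun y (_ : y ∈ Fκ) => ⨅ φ ∈ Ψ, (L φ y : EReal)) x hxF
    · rw [eq1, ← hd]
      exact le_iInf₂ fun φ hφ => EReal.coe_le_coe_iff.mpr (hlow φ hφ)
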